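/- Under TDM, if x_{n,i} > 0 and x_{m,j} > 0 in a PS-DSF allocation, then any feasible exchange that keeps Σ x/γ = 1 at servers i and j (Δx_{n,j} = −Δx_{m,j}·γ_{n,j}/γ_{m,j}, Δx_{m,i} = −Δx_{n,i}·γ_{m,i}/γ_{n,i}) and strictly increases user n's total tasks (Δx_{n,i} + Δx_{n,j} > 0) must strictly decrease user m's total tasks (Δx_{m,i} + Δx_{m,j} < 0). -/

import Mathlib

/-- Exchange lemma under TDM: if `x_{n,i} > 0` and `x_{m,j} > 0` in a PS-DSF allocation
(so that `γ_{m,i}/γ_{n,i} ≤ (φ_n/φ_m)(x_m/x_n)` and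
`γ_{n,j}/γ_{m,j} ≤ (φ_m/φ_n)(x_n/x_m)`), then any feasible exchange of (parts of) their
allocations between servers `i` and `j` keeping the TDM equalities
(`Δx_{n,j} = −Δx_{m,j}·γ_{n,j}/γ_{m,j}`, `Δx_{m,i} = −Δx_{n,i}·γ_{m,i}/γ_{n,i}`,
with `Δx_{n,i} ≤ 0`, `Δx_{m,j} ≤ 0`) that strictly increases user `n`'s total tasks
must strictly decrease user `m`'s total tasks. -/
theorem tdm_exchange_decreases_other
    (γni γnj γmi γmj φn φm xn xm : ℝ)
    (hγni : 0 < γni) (hγnj : 0 < γnj) (hγmi : 0 < γmi) (hγmj : 0 < γmj)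
    (hφn : 0 < φn) (hφm : 0 < φm) (hxn : 0 < xn) (hxm : 0 < xm)
    (h1 : γmi / γni ≤ (φn / φm) * (xm / xn))
    (h2 : γnj / γmj ≤ (φm / φn) * (xn / xm))
    (Δni Δnj Δmi Δmj : ℝ)
    (hΔni : Δni ≤ 0) (hΔmj : Δmj ≤ 0)
    (hj : Δnj = -Δmj * (γnj / γmj))
    (hi : Δmi = -Δni * (γmi / γni))
    (hinc : 0 < Δni + Δnj) :
    Δmi + Δmj < 0 := by
  set a := -Δni with ha
  set b := -Δmj with hb
  have ha0 : 0 ≤ a := by linarith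
  have hb0 : 0 ≤ b := by linarith
  set r1 := γmi / γni with hr1
  set r2 := γnj / γmj with hr2
  have hr1p : 0 < r1 := div_pos hγmi hγni
  have hr2p : 0 < r2 := div_pos hγnj hγmj
  set k := (φm / φn) * (xn / xm) with hk
  have hkp : 0 < k := by positivity
  have hinv : (φn / φm) * (xm / xn) = 1 / k := by
    field_simp [hk]
    rw [hk]
    field_simp
  rw [hinv] at h1
  have hinc' : a < b * r2 := by rw [hj] at hinc; linarith
  -- a*r1 ≤ a/k, b*r2 ≤ b*k
  have h3 : a * r1 ≤ a * (1 / k) := by nlinarith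
  have h4 : b * r2 ≤ b * k := by nlinarith
  have h5 : a < b * k := lt_of_lt_of_le hinc' h4
  have h6 : a * (1 / k) < b := by
    rw [mul_one_div, div_lt_iff₀ hkp]
    linarith
  rw [hi]
  have : a * r1 < b := lt_of_le_of_lt h3 h6
  linarith
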